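/- Let N ≥ 1 and let X : ℝ/ℤ × ℝ^N → ℝ^N be continuous and Lipschitz in the second variable uniformly in t. Let γ_n : ℝ/ℤ → ℝ^N be a sequence of C¹ loops converging uniformly to a continuous loop γ_∞, and suppose that ∫₀¹ |γ_n'(t) − X(t, γ_n(t))|² dt → 0 as n → ∞. Then γ_∞ is continuously differentiable and satisfies γ_∞'(t) = X(t, γ_∞(t)) for all t; in particular γ_∞ is a 1-periodic integral curve of X. -/

import Mathlib

open MeasureTheory Set Filter

/-- If `γₙ` are `C¹` loops converging uniformly to `γlim` and the `L²`-violation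
`∫₀¹ |γₙ' − X(t,γₙ)|² dt → 0`, then `γlim` is a `C¹` 1-periodic integral curve
of `X`. Loops are modelled as 1-periodic functions on `ℝ`. -/
theorem stmt_3 (N : ℕ) (hN : 1 ≤ N)
    (X : ℝ → EuclideanSpace ℝ (Fin N) → EuclideanSpace ℝ (Fin N))
    (hXcont : Continuous (Function.uncurry X))
    (hXper : ∀ x : EuclideanSpace ℝ (Fin N), Function.Periodic (fun t => X t x) 1)
    (CX : ℝ)
    (hXlip : ∀ t : ℝ, ∀ x y : EuclideanSpace ℝ (Fin N),
      ‖X t x - X t y‖ ≤ CX * ‖x - y‖)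
    (γ : ℕ → ℝ → EuclideanSpace ℝ (Fin N))
    (hγC1 : ∀ n, ContDiff ℝ 1 (γ n))
    (hγper : ∀ n, Function.Periodic (γ n) 1)
    (γlim : ℝ → EuclideanSpace ℝ (Fin N))
    (hγlimcont : Continuous γlim)
    (hγlimper : Function.Periodic γlim 1)
    (hconv : TendstoUniformly γ γlim atTop)
    (hL2 : Tendsto (fun n => ∫ t in (0:ℝ)..1, ‖deriv (γ n) t - X t (γ n t)‖ ^ 2)
      atTop (nhds 0)) :
    ContDiff ℝ 1 γlim ∧ (∀ t : ℝ, HasDerivAt γlim (X t (γlim t)) t) := by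
  -- the nonnegative Lipschitz constant
  set C' : ℝ := max CX 0 with hC'
  have hC'0 : 0 ≤ C' := le_max_right _ _
  have hXlip' : ∀ t : ℝ, ∀ x y, ‖X t x - X t y‖ ≤ C' * ‖x - y‖ := fun t x y =>
    (hXlip t x y).trans (mul_le_mul_of_nonneg_right (le_max_left _ _) (norm_nonneg _))
  have contγ : ∀ n, Continuous (γ n) := fun n => (hγC1 n).continuous
  have contd : ∀ n, Continuous (deriv (γ n)) := fun n => (hγC1 n).continuous_deriv le_rfl
  set f : ℕ → ℝ → EuclideanSpace ℝ (Fin N) := fun n t => deriv (γ n) t - X t (γ n t) with hfdef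
  have contXγ : ∀ n, Continuous (fun t => X t (γ n t)) := fun n =>
    hXcont.comp (continuous_id.prodMk (contγ n))
  have contf : ∀ n, Continuous (f n) := fun n => (contd n).sub (contXγ n)
  -- periodicity of the violation
  have dper : ∀ n, Function.Periodic (deriv (γ n)) 1 := by
    intro n t
    have h1 : (fun x => γ n (x + 1)) = γ n := funext fun x => hγper n x
    calc deriv (γ n) (t + 1) = deriv (fun x => γ n (x + 1)) t := (deriv_comp_add_const _ _ _).symm
    _ = deriv (γ n) t := by rw [h1]
  have fper : ∀ n, Function.Periodic (fun t => ‖f n t‖) 1 := by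
    intro n t
    simp only [hfdef]
    rw [dper n t, hγper n t, show X (t+1) (γ n t) = X t (γ n t) from hXper (γ n t) t]
  -- L¹ convergence
  set I : ℕ → ℝ := fun n => ∫ t in (0:ℝ)..1, ‖f n t‖ with hIdef
  have hInn : ∀ n, 0 ≤ I n := fun n =>
    intervalIntegral.integral_nonneg (by norm_num) (fun t _ => norm_nonneg _)
  have hI : Tendsto I atTop (nhds 0) := by
    rw [Metric.tendsto_atTop] at hL2 ⊢
    intro ε hε
    obtain ⟨M, hM⟩ := hL2 (ε ^ 2 / 2) (by positivity)
    refine ⟨M, fun n hn => ?_⟩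
    have hJ := hM n hn
    rw [Real.dist_eq, sub_zero] at hJ
    have hJnn : 0 ≤ ∫ t in (0:ℝ)..1, ‖f n t‖ ^ 2 :=
      intervalIntegral.integral_nonneg (by norm_num) (fun t _ => sq_nonneg _)
    rw [abs_of_nonneg hJnn] at hJ
    rw [Real.dist_eq, sub_zero, abs_of_nonneg (hInn n)]
    have key : I n ≤ ε / 2 + (∫ t in (0:ℝ)..1, ‖f n t‖ ^ 2) / ε := by
      have h1 : I n ≤ ∫ t in (0:ℝ)..1, (ε / 2 + ‖f n t‖ ^ 2 / ε) := by
        apply intervalIntegral.integral_mono_on (by norm_num)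
          (((contf n).norm).intervalIntegrable _ _)
          ((continuous_const.add (((contf n).norm.pow 2).div_const ε)).intervalIntegrable _ _)
        intro t _
        show ‖f n t‖ ≤ ε / 2 + ‖f n t‖ ^ 2 / ε
        rw [div_add_div _ _ (by norm_num : (2:ℝ) ≠ 0) (ne_of_gt hε), le_div_iff₀ (by positivity)]
        nlinarith [sq_nonneg (‖f n t‖ - ε / 2), norm_nonneg (f n t)]
      have h2 : (∫ t in (0:ℝ)..1, (ε / 2 + ‖f n t‖ ^ 2 / ε))
          = ε / 2 + (∫ t in (0:ℝ)..1, ‖f n t‖ ^ 2) / ε := by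
        rw [intervalIntegral.integral_add (g := fun t => ‖f n t‖ ^ 2 / ε) (intervalIntegrable_const)
          ((((contf n).norm.pow 2).div_const ε).intervalIntegrable _ _),
          intervalIntegral.integral_const, intervalIntegral.integral_div]
        simp
      linarith [h1.trans_eq h2]
    have : (∫ t in (0:ℝ)..1, ‖f n t‖ ^ 2) / ε < ε / 2 := by
      rw [div_lt_iff₀ hε]
      nlinarith
    linarith
  -- the integral identity in the limit
  have hg : Continuous (fun t => X t (γlim t)) := hXcont.comp (continuous_id.prodMk hγlimcont)
  have hInt : ∀ t : ℝ, γlim t = γlim 0 + ∫ s in (0:ℝ)..t, X s (γlim s) := by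
    intro t
    set a : ℕ → EuclideanSpace ℝ (Fin N) :=
      fun n => γ n t - γ n 0 - ∫ s in (0:ℝ)..t, X s (γ n s) with hadef
    -- a n = ∫₀ᵗ f n
    have ha : ∀ n, a n = ∫ s in (0:ℝ)..t, f n s := by
      intro n
      have hFTC : (∫ s in (0:ℝ)..t, deriv (γ n) s) = γ n t - γ n 0 :=
        intervalIntegral.integral_deriv_eq_sub
          (fun x _ => ((hγC1 n).differentiable one_ne_zero).differentiableAt)
          ((contd n).intervalIntegrable _ _)
      rw [hadef]
      simp only [hfdef]
      rw [intervalIntegral.integral_sub ((contd n).intervalIntegrable _ _)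
        ((contXγ n).intervalIntegrable _ _), hFTC]
    -- a n → 0
    have ha0 : Tendsto a atTop (nhds 0) := by
      set m : ℝ := (⌈|t|⌉₊ : ℝ) with hmdef
      have hm : |t| ≤ m := Nat.le_ceil _
      have hm0 : 0 ≤ m := (abs_nonneg t).trans hm
      apply squeeze_zero_norm (f := a) (a := fun n => 2 * m * I n)
      · intro n
        rw [ha n]
        calc ‖∫ s in (0:ℝ)..t, f n s‖ ≤ |∫ s in (0:ℝ)..t, ‖f n s‖| :=
              intervalIntegral.norm_integral_le_abs_integral_norm
        _ ≤ |∫ s in (-m)..m, ‖f n s‖| := by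
              apply intervalIntegral.abs_integral_mono_interval
              · apply uIoc_subset_uIoc_of_uIcc_subset_uIcc
                apply uIcc_subset_uIcc <;> rw [mem_uIcc]
                · left; constructor <;> linarith [neg_abs_le t, abs_nonneg t]
                · left; constructor <;> linarith [neg_abs_le t, le_abs_self t]
              · exact Eventually.of_forall fun s => norm_nonneg _
              · exact ((contf n).norm).intervalIntegrable _ _
        _ = 2 * m * I n := by
              have hper := (fper n).intervalIntegral_add_zsmul_eq (2 * ⌈|t|⌉₊ : ℤ) (-m)
                (fun t₁ t₂ => ((contf n).norm).intervalIntegrable _ _)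
              have he : -m + (2 * ⌈|t|⌉₊ : ℤ) • (1:ℝ) = m := by
                rw [zsmul_eq_mul, hmdef]; push_cast; ring
              have he2 : (∫ s in (-m)..(-m + 1), ‖f n s‖) = I n := by
                rw [hIdef]
                simpa using (fper n).intervalIntegral_add_eq (-m) 0
              rw [he] at hper
              rw [hper, he2, abs_of_nonneg]
              · simp only [zsmul_eq_mul]; push_cast; ring
              · have := hInn n
                positivity
      · have : Tendsto (fun n => 2 * m * I n) atTop (nhds (2 * m * 0)) :=
          hI.const_mul (2 * m)
        simpa using this
    -- a n → γlim t - γlim 0 - ∫₀ᵗ X s (γlim s)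
    have halim : Tendsto a atTop
        (nhds (γlim t - γlim 0 - ∫ s in (0:ℝ)..t, X s (γlim s))) := by
      have h1 : Tendsto (fun n => γ n t) atTop (nhds (γlim t)) := hconv.tendsto_at t
      have h2 : Tendsto (fun n => γ n 0) atTop (nhds (γlim 0)) := hconv.tendsto_at 0
      have h3 : Tendsto (fun n => ∫ s in (0:ℝ)..t, X s (γ n s)) atTop
          (nhds (∫ s in (0:ℝ)..t, X s (γlim s))) := by
        rw [Metric.tendsto_atTop]
        intro ε hε
        rw [Metric.tendstoUniformly_iff] at hconv
        have hε' : (0:ℝ) < ε / (C' * (|t| + 1) + 1) := by positivity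
        obtain ⟨M, hM⟩ := (hconv _ hε').exists_forall_of_atTop
        refine ⟨M, fun n hn => ?_⟩
        rw [dist_eq_norm, ← intervalIntegral.integral_sub ((contXγ n).intervalIntegrable _ _)
          (hg.intervalIntegrable _ _)]
        have hb : ‖∫ s in (0:ℝ)..t, (X s (γ n s) - X s (γlim s))‖
            ≤ C' * (ε / (C' * (|t| + 1) + 1)) * |t - 0| := by
          apply intervalIntegral.norm_integral_le_of_norm_le_const
          intro s _
          calc ‖X s (γ n s) - X s (γlim s)‖ ≤ C' * ‖γ n s - γlim s‖ := hXlip' s _ _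
          _ ≤ C' * (ε / (C' * (|t| + 1) + 1)) := by
                apply mul_le_mul_of_nonneg_left _ hC'0
                rw [← dist_eq_norm, dist_comm]
                exact le_of_lt (hM n hn s)
        refine lt_of_le_of_lt hb ?_
        rw [sub_zero]
        rw [div_eq_mul_inv, mul_comm C', mul_assoc]
        rw [show ε * (C' * (|t| + 1) + 1)⁻¹ * (C' * |t|)
          = ε * ((C' * |t|) / (C' * (|t| + 1) + 1)) by ring]
        have hlt : (C' * |t|) / (C' * (|t| + 1) + 1) < 1 := by
          rw [div_lt_one (by positivity)]
          nlinarith [abs_nonneg t]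
        calc ε * ((C' * |t|) / (C' * (|t| + 1) + 1)) < ε * 1 := by
              apply mul_lt_mul_of_pos_left hlt hε
        _ = ε := mul_one ε
      exact (h1.sub h2).sub h3
    have := tendsto_nhds_unique ha0 halim
    have h0 : γlim t - γlim 0 - (∫ s in (0:ℝ)..t, X s (γlim s)) = 0 := this.symm
    have := sub_eq_zero.mp h0
    linear_combination (norm := abel) this
  -- conclude
  have hDeriv : ∀ t : ℝ, HasDerivAt γlim (X t (γlim t)) t := by
    intro t
    have h1 : HasDerivAt (fun u => ∫ s in (0:ℝ)..u, X s (γlim s)) (X t (γlim t)) t :=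
      intervalIntegral.integral_hasDerivAt_right (hg.intervalIntegrable _ _)
        hg.stronglyMeasurable.stronglyMeasurableAtFilter hg.continuousAt
    exact (h1.const_add (γlim 0)).congr_of_eventuallyEq
      (Eventually.of_forall fun u => hInt u)
  refine ⟨?_, hDeriv⟩
  rw [contDiff_one_iff_deriv]
  refine ⟨fun t => (hDeriv t).differentiableAt, ?_⟩
  have : deriv γlim = fun t => X t (γlim t) := funext fun t => (hDeriv t).deriv
  rw [this]
  exact hg
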